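/- arXiv:1605.07416 — 2 statements merged into one kernel-verified Lean document; each statement's English description precedes it below -/
import Mathlib

section
/- Let σ > 0, ε ∈ ℝ, and let Z be a Gaussian random variable with mean 1/2 and variance σ². Define X = clip_{[0,1]}(Z) and Y = clip_{[0,1]}(Z − ε), where clip_{[0,1]}(x) = min(1, max(0, x)). Then KL( law(X), law(Y) ) ≤ ε²/(2σ²), where KL denotes the Kullback–Leibler divergence between the distributions of X and Y on [0,1]. -/
open MeasureTheory ProbabilityTheory Real
open scoped ENNReal NNReal Classical

namespace BanditLB

structure Strategy (K : ℕ) (Ω : Type*) [MeasurableSpace Ω] where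
  μ : Measure Ω
  prob : IsProbabilityMeasure μ
  act : (ℕ → Fin K → ℝ) → ℕ → Ω → Fin K
  meas_act : ∀ t : ℕ, Measurable fun p : (ℕ → Fin K → ℝ) × Ω => act p.1 t p.2
  adapted : ∀ ℓ ℓ' : ℕ → Fin K → ℝ, ∀ t : ℕ, ∀ ω : Ω,
    (∀ s < t, act ℓ s ω = act ℓ' s ω ∧ ℓ s (act ℓ s ω) = ℓ' s (act ℓ s ω)) →
    act ℓ t ω = act ℓ' t ω

variable {K : ℕ} {Ω : Type*} [MeasurableSpace Ω]

noncomputable def regret (S : Strategy K Ω) (T : ℕ) (ℓ : ℕ → Fin K → ℝ) (ω : Ω) : ℝ :=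
  ∑ t ∈ Finset.range T, ℓ t (S.act ℓ t ω) - ⨅ i : Fin K, ∑ t ∈ Finset.range T, ℓ t i

def numPlays (S : Strategy K Ω) (ℓ : ℕ → Fin K → ℝ) (i : Fin K) (t : ℕ) (ω : Ω) : ℕ :=
  ((Finset.range t).filter fun s => S.act ℓ s ω = i).card

/-- The joint law of (loss sequence, internal randomisation) when the loss sequence is
drawn from `ν` independently of the internal randomisation. -/
noncomputable def joint (S : Strategy K Ω) (ν : Measure (ℕ → Fin K → ℝ)) :
    Measure ((ℕ → Fin K → ℝ) × Ω) := ν.prod S.μ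

/-- `ν` is the law of an i.i.d. sequence with common distribution `Q`:
`ν` is a probability measure all of whose finite-dimensional marginals are product measures. -/
def IsIIDSeq {β : Type*} [MeasurableSpace β] (ν : Measure (ℕ → β)) (Q : Measure β) : Prop :=
  IsProbabilityMeasure ν ∧
    ∀ n : ℕ, ν.map (fun f (s : Fin n) => f (s : ℕ)) = Measure.pi fun _ : Fin n => Q

/-- The Kullback–Leibler divergence (with value `∞` unless `P ≪ Q` and the
log-likelihood ratio is `P`-integrable). -/
noncomputable def klDiv {α : Type*} [MeasurableSpace α] (P Q : Measure α) : ℝ≥0∞ :=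
  if P ≪ Q ∧ Integrable (llr P Q) P then ENNReal.ofReal (∫ x, llr P Q x ∂P) else ⊤

/-- The Bernoulli distribution with parameter `p`, as a measure on `ℝ` (mass `p` at `1`,
mass `1 - p` at `0`). -/
noncomputable def bern (p : ℝ) : Measure ℝ :=
  ENNReal.ofReal p • Measure.dirac 1 + ENNReal.ofReal (1 - p) • Measure.dirac 0

noncomputable def clip01 (x : ℝ) : ℝ := min 1 (max 0 x)

/-- The correlated clipped-Gaussian loss sequence of environment `j` built from the
Gaussian sequence `z` (arm `0` plays the role of arm `1` in the paper). -/
noncomputable def clipEnvLoss {K : ℕ} [NeZero K] (Δ : ℝ) (j : Fin K) (z : ℕ → ℝ) :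
    ℕ → Fin K → ℝ :=
  fun t i => if i = 0 then clip01 (z t - Δ)
    else if i = j then clip01 (z t - 2 * Δ) else clip01 (z t)

/-- The variance used in the clipped-Gaussian environments, `σ² = 1/(32 log 2)`. -/
noncomputable def sigSq : ℝ := 1 / (32 * Real.log 2)

/-- The law of the clipped-Gaussian environment `j`: the image of the law `γ` of the
i.i.d. Gaussian sequence under the loss map. -/
noncomputable def clipEnv {K : ℕ} [NeZero K] (Δ : ℝ) (j : Fin K)
    (γ : Measure (ℕ → ℝ)) : Measure (ℕ → Fin K → ℝ) :=
  γ.map (clipEnvLoss Δ j)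


section Helpers

open Set

lemma clip01_of_nonpos {x : ℝ} (hx : x ≤ 0) : clip01 x = 0 := by
  rw [clip01, max_eq_left hx, min_eq_right zero_le_one]

lemma clip01_of_one_le {x : ℝ} (hx : 1 ≤ x) : clip01 x = 1 := by
  rw [clip01, max_eq_right (zero_le_one.trans hx), min_eq_left hx]

lemma clip01_of_mem {x : ℝ} (h0 : 0 ≤ x) (h1 : x ≤ 1) : clip01 x = x := by
  rw [clip01, max_eq_right h0, min_eq_right h1]

lemma clip01_nonneg (x : ℝ) : 0 ≤ clip01 x := le_min zero_le_one (le_max_left _ _)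

lemma clip01_le_one (x : ℝ) : clip01 x ≤ 1 := min_le_left _ _

lemma measurable_clip01 : Measurable clip01 :=
  (continuous_const.min (continuous_const.max continuous_id)).measurable

lemma map_clip01_decomp (μ : Measure ℝ) [IsFiniteMeasure μ] :
    μ.map clip01 = μ.restrict (Ioo 0 1) + μ (Iic 0) • Measure.dirac (0:ℝ)
      + μ (Ici 1) • Measure.dirac (1:ℝ) := by
  ext s hs
  rw [Measure.map_apply measurable_clip01 hs]
  have hps : MeasurableSet (clip01 ⁻¹' s) := measurable_clip01 hs
  have hpre : clip01 ⁻¹' s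
      = (s ∩ Ioo 0 1) ∪ ((Iic 0 ∩ clip01 ⁻¹' s) ∪ (Ici 1 ∩ clip01 ⁻¹' s)) := by
    ext x
    simp only [Set.mem_union, Set.mem_inter_iff, Set.mem_preimage, Set.mem_Ioo, Set.mem_Iic,
      Set.mem_Ici]
    constructor
    · intro hx
      rcases le_or_gt x 0 with h | h
      · exact Or.inr (Or.inl ⟨h, hx⟩)
      rcases lt_or_ge x 1 with h' | h'
      · exact Or.inl ⟨by rwa [clip01_of_mem h.le h'.le] at hx, h, h'⟩
      · exact Or.inr (Or.inr ⟨h', hx⟩)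
    · rintro (⟨hxs, h0, h1⟩ | ⟨_, hx⟩ | ⟨_, hx⟩)
      · rwa [clip01_of_mem h0.le h1.le]
      · exact hx
      · exact hx
  have d2 : Disjoint (Iic (0:ℝ) ∩ clip01 ⁻¹' s) (Ici (1:ℝ) ∩ clip01 ⁻¹' s) := by
    refine Set.disjoint_left.2 ?_
    rintro x ⟨hx, -⟩ ⟨hx', -⟩
    simp only [Set.mem_Iic] at hx
    simp only [Set.mem_Ici] at hx'
    linarith
  have d1 : Disjoint (s ∩ Ioo (0:ℝ) 1)
      ((Iic (0:ℝ) ∩ clip01 ⁻¹' s) ∪ (Ici (1:ℝ) ∩ clip01 ⁻¹' s)) := by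
    refine Set.disjoint_left.2 ?_
    rintro x ⟨-, hx0, hx1⟩ (⟨hx, -⟩ | ⟨hx, -⟩)
    · simp only [Set.mem_Iic] at hx; linarith
    · simp only [Set.mem_Ici] at hx; linarith
  rw [hpre, measure_union d1 ((measurableSet_Iic.inter hps).union (measurableSet_Ici.inter hps)),
    measure_union d2 (measurableSet_Ici.inter hps)]
  have hA : μ (Iic 0 ∩ clip01 ⁻¹' s) = μ (Iic 0) * s.indicator 1 0 := by
    by_cases h0 : (0:ℝ) ∈ s
    · have he : Iic (0:ℝ) ∩ clip01 ⁻¹' s = Iic 0 := by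
        ext x
        refine ⟨fun h => h.1, fun hx => ⟨hx, ?_⟩⟩
        simp only [Set.mem_preimage]
        rwa [clip01_of_nonpos hx]
      simp [he, Set.indicator_of_mem h0]
    · have he : Iic (0:ℝ) ∩ clip01 ⁻¹' s = ∅ := by
        ext x
        simp only [Set.mem_inter_iff, Set.mem_Iic, Set.mem_preimage, Set.mem_empty_iff_false,
          iff_false, not_and]
        intro hx hm
        rw [clip01_of_nonpos hx] at hm
        exact h0 hm
      simp [he, Set.indicator_of_notMem h0]
  have hC : μ (Ici 1 ∩ clip01 ⁻¹' s) = μ (Ici 1) * s.indicator 1 1 := by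
    by_cases h1 : (1:ℝ) ∈ s
    · have he : Ici (1:ℝ) ∩ clip01 ⁻¹' s = Ici 1 := by
        ext x
        refine ⟨fun h => h.1, fun hx => ⟨hx, ?_⟩⟩
        simp only [Set.mem_preimage]
        rwa [clip01_of_one_le hx]
      simp [he, Set.indicator_of_mem h1]
    · have he : Ici (1:ℝ) ∩ clip01 ⁻¹' s = ∅ := by
        ext x
        simp only [Set.mem_inter_iff, Set.mem_Ici, Set.mem_preimage, Set.mem_empty_iff_false,
          iff_false, not_and]
        intro hx hm
        rw [clip01_of_one_le hx] at hm
        exact h1 hm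
      simp [he, Set.indicator_of_notMem h1]
  rw [hA, hC]
  simp only [Measure.add_apply, Measure.smul_apply, Measure.dirac_apply' _ hs,
    Measure.restrict_apply hs, smul_eq_mul]
  ring

lemma withDensity_dirac {f : ℝ → ℝ≥0∞} (hf : Measurable f) (a : ℝ) :
    (Measure.dirac a).withDensity f = f a • Measure.dirac a := by
  ext s hs
  rw [withDensity_apply _ hs, restrict_dirac' hs, Measure.smul_apply,
    Measure.dirac_apply' _ hs]
  by_cases h : a ∈ s
  · simp [h, lintegral_dirac' a hf]
  · simp [h]

lemma gaussianReal_set_ne_zero (m : ℝ) {v : ℝ≥0} (hv : v ≠ 0) {s : Set ℝ}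
    (hs : volume s ≠ 0) : gaussianReal m v s ≠ 0 :=
  fun h => hs ((gaussianReal_absolutelyContinuous' m hv) h)

lemma integrable_mul_gaussianPDFReal (m : ℝ) {v : ℝ≥0} (hv : v ≠ 0) :
    Integrable (fun x => gaussianPDFReal m v x * x) := by
  have hv0 : (0:ℝ) < (v:ℝ) := by positivity
  have hb : (0:ℝ) < (2 * (v:ℝ))⁻¹ := by positivity
  have h1 : Integrable (fun y : ℝ =>
      (√(2 * π * (v:ℝ)))⁻¹ * (y * rexp (-(2 * (v:ℝ))⁻¹ * y ^ 2)
        + m * rexp (-(2 * (v:ℝ))⁻¹ * y ^ 2))) volume :=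
    ((integrable_mul_exp_neg_mul_sq hb).add
      ((integrable_exp_neg_mul_sq hb).const_mul m)).const_mul _
  have h2 := h1.comp_sub_right m
  refine h2.congr (ae_of_all _ fun x => ?_)
  have harg : -(2 * (v:ℝ))⁻¹ * (x - m) ^ 2 = -(x - m) ^ 2 / (2 * (v:ℝ)) := by
    field_simp
  simp only [harg]
  rw [gaussianPDFReal]
  ring

lemma integral_mul_gaussianPDFReal (m : ℝ) {v : ℝ≥0} (hv : v ≠ 0) :
    ∫ x, gaussianPDFReal m v x * x = m := by
  have key : ∫ x, gaussianPDFReal m v x * x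
      = ∫ x, gaussianPDFReal m v (x + m) * (x + m) :=
    (integral_add_right_eq_self (fun x => gaussianPDFReal m v x * x) m).symm
  have hshift : ∀ x : ℝ, gaussianPDFReal m v (x + m) = gaussianPDFReal 0 v x := by
    intro x
    rw [gaussianPDFReal_add x m, sub_self]
  have hodd : ∫ x, gaussianPDFReal 0 v x * x = 0 := by
    have A : MeasurableEmbedding (fun x : ℝ => -x) :=
      (Homeomorph.neg ℝ).isClosedEmbedding.measurableEmbedding
    set F : ℝ → ℝ := fun y => gaussianPDFReal 0 v y * y with hF
    have h1 : ∫ x, F (-x) = ∫ x, F x := by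
      rw [← A.integral_map, Measure.map_neg_eq_self]
    have h2 : ∀ x : ℝ, F (-x) = -F x := by
      intro x
      have h3 : gaussianPDFReal 0 v (-x) = gaussianPDFReal 0 v x := by
        simp [gaussianPDFReal, neg_sq]
      simp only [hF, h3]; ring
    simp_rw [h2, integral_neg] at h1
    show ∫ x, F x = 0
    linarith
  rw [key]
  simp_rw [hshift]
  have hi1 : Integrable (fun x => gaussianPDFReal 0 v x * x) :=
    integrable_mul_gaussianPDFReal 0 hv
  have hi2 : Integrable (fun x => gaussianPDFReal 0 v x * m) :=
    (integrable_gaussianPDFReal 0 v).mul_const m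
  have : (fun x => gaussianPDFReal 0 v x * (x + m))
      = fun x => gaussianPDFReal 0 v x * x + gaussianPDFReal 0 v x * m := by
    funext x; ring
  rw [this, integral_add hi1 hi2, hodd, zero_add, integral_mul_const m _,
    integral_gaussianPDFReal_eq_one 0 hv, one_mul]

end Helpers

section Part2

open Set

lemma gaussianPDFReal_mul_exp {σ ε : ℝ} (hσ : 0 < σ) (x : ℝ) :
    gaussianPDFReal (1/2 - ε) ⟨σ^2, sq_nonneg σ⟩ x * rexp (ε * (2*x - 1 + ε) / (2*σ^2))
      = gaussianPDFReal (1/2) ⟨σ^2, sq_nonneg σ⟩ x := by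
  have hσ2 : (0:ℝ) < σ^2 := by positivity
  unfold gaussianPDFReal
  erw [NNReal.coe_mk]
  rw [mul_assoc, ← Real.exp_add]
  congr 1
  rw [Real.exp_eq_exp]
  field_simp
  ring

lemma tail_jensen {P Q : Measure ℝ} [IsProbabilityMeasure P] [IsProbabilityMeasure Q]
    {L : ℝ → ℝ} {A : Set ℝ} (hA : MeasurableSet A) (hPA : P A ≠ 0) (hQA : Q A ≠ 0)
    (hq : (Q A).toReal = ∫ x in A, rexp (-L x) ∂P)
    (hL : Integrable L P) (hE : Integrable (fun x => rexp (-L x)) P) :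
    Real.log ((P A / Q A).toReal) * (P A).toReal ≤ ∫ x in A, L x ∂P := by
  have hpA0 : 0 < (P A).toReal := ENNReal.toReal_pos hPA (measure_ne_top _ _)
  have hqA0 : 0 < (Q A).toReal := ENNReal.toReal_pos hQA (measure_ne_top _ _)
  set pA := (P A).toReal
  set qA := (Q A).toReal
  set I := ∫ x in A, L x ∂P with hI
  haveI : NeZero (P.restrict A) := ⟨by rwa [ne_eq, Measure.restrict_eq_zero]⟩
  have hJ := (convexOn_exp).map_average_le (μ := P.restrict A) (f := fun x => -(L x))
      continuous_exp.continuousOn isClosed_univ (ae_of_all _ fun x => Set.mem_univ _)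
      hL.neg.restrict hE.restrict
  rw [average_eq, average_eq, measureReal_restrict_apply_univ, Measure.real] at hJ
  simp only [integral_neg, smul_eq_mul] at hJ
  rw [← hq] at hJ
  -- hJ : rexp (pA⁻¹ * -I) ≤ pA⁻¹ * qA
  have hlog := (Real.le_log_iff_exp_le (by positivity)).2 hJ
  rw [Real.log_mul (by positivity) hqA0.ne', Real.log_inv] at hlog
  have h2 : -I ≤ pA * (-Real.log pA + Real.log qA) := by
    have := mul_le_mul_of_nonneg_left hlog hpA0.le
    rwa [← mul_assoc, mul_inv_cancel₀ hpA0.ne', one_mul] at this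
  rw [ENNReal.toReal_div, Real.log_div hpA0.ne' hqA0.ne']
  nlinarith [h2]

end Part2

section Main

open Set

set_option maxHeartbeats 2000000 in
lemma clipped_kl_le {σ ε : ℝ} (hσ : 0 < σ) :
    klDiv ((gaussianReal (1/2) ⟨σ ^ 2, sq_nonneg σ⟩).map clip01)
        ((gaussianReal (1/2 - ε) ⟨σ ^ 2, sq_nonneg σ⟩).map clip01)
      ≤ ENNReal.ofReal (ε ^ 2 / (2 * σ ^ 2)) := by
  have hσ2 : (0:ℝ) < σ ^ 2 := by positivity
  set v : ℝ≥0 := ⟨σ ^ 2, sq_nonneg σ⟩ with hvdef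
  have hv : v ≠ 0 := by
    intro h
    have h2 : (v:ℝ) = 0 := by rw [h]; rfl
    have h3 : (v:ℝ) = σ ^ 2 := rfl
    rw [h3] at h2
    exact hσ2.ne' h2
  set P := gaussianReal (1/2) v with hPdef
  set Q := gaussianReal (1/2 - ε) v with hQdef
  haveI : IsProbabilityMeasure P := by rw [hPdef]; infer_instance
  haveI : IsProbabilityMeasure Q := by rw [hQdef]; infer_instance
  haveI : IsProbabilityMeasure (P.map clip01) :=
    Measure.isProbabilityMeasure_map measurable_clip01.aemeasurable
  haveI : IsProbabilityMeasure (Q.map clip01) :=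
    Measure.isProbabilityMeasure_map measurable_clip01.aemeasurable
  set L : ℝ → ℝ := fun x => ε * (2*x - 1 + ε) / (2*σ^2) with hLdef
  have hLmeas : Measurable L := by
    apply Measurable.div_const
    exact (((measurable_id.const_mul 2).sub_const 1).add_const ε).const_mul ε
  have hLaffine : L = fun x => (ε/σ^2) * x + (ε*(ε-1)/(2*σ^2)) := by
    funext x
    show ε * (2*x - 1 + ε) / (2*σ^2) = (ε/σ^2) * x + (ε*(ε-1)/(2*σ^2))
    field_simp
    ring
  have hp0 : P (Iic 0) ≠ 0 := gaussianReal_set_ne_zero _ hv (by simp [Real.volume_Iic])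
  have hp1 : P (Ici 1) ≠ 0 := gaussianReal_set_ne_zero _ hv (by simp [Real.volume_Ici])
  have hq0 : Q (Iic 0) ≠ 0 := gaussianReal_set_ne_zero _ hv (by simp [Real.volume_Iic])
  have hq1 : Q (Ici 1) ≠ 0 := gaussianReal_set_ne_zero _ hv (by simp [Real.volume_Ici])
  set H : ℝ → ℝ≥0∞ := fun x =>
    if x = 0 then P (Iic 0) / Q (Iic 0)
    else if x = 1 then P (Ici 1) / Q (Ici 1)
    else ENNReal.ofReal (rexp (L x)) with hHdef
  have hHmeas : Measurable H := by
    refine Measurable.ite measurableSet_eq measurable_const ?_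
    refine Measurable.ite measurableSet_eq measurable_const ?_
    exact (Real.measurable_exp.comp hLmeas).ennreal_ofReal
  have hH0 : H 0 = P (Iic 0) / Q (Iic 0) := if_pos rfl
  have hH1 : H 1 = P (Ici 1) / Q (Ici 1) := by
    show (if (1:ℝ) = 0 then P (Iic 0) / Q (Iic 0)
      else if (1:ℝ) = 1 then P (Ici 1) / Q (Ici 1)
      else ENNReal.ofReal (rexp (L 1))) = P (Ici 1) / Q (Ici 1)
    rw [if_neg one_ne_zero, if_pos rfl]
  have hHx : ∀ x ∈ Ioo (0:ℝ) 1, H x = ENNReal.ofReal (rexp (L x)) := by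
    intro x hx
    show (if x = 0 then P (Iic 0) / Q (Iic 0)
      else if x = 1 then P (Ici 1) / Q (Ici 1)
      else ENNReal.ofReal (rexp (L x))) = ENNReal.ofReal (rexp (L x))
    rw [if_neg hx.1.ne', if_neg hx.2.ne]
  have hpdfm : ∀ x ∈ Ioo (0:ℝ) 1, gaussianPDF (1/2 - ε) v x * H x = gaussianPDF (1/2) v x := by
    intro x hx
    have h1 : gaussianPDFReal (1/2 - ε) v x * rexp (L x) = gaussianPDFReal (1/2) v x :=
      gaussianPDFReal_mul_exp hσ x
    rw [hHx x hx, gaussianPDF, gaussianPDF, ← ENNReal.ofReal_mul (gaussianPDFReal_nonneg _ _ _)]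
    rw [h1]
  have hPd : P = volume.withDensity (gaussianPDF (1/2) v) := gaussianReal_of_var_ne_zero _ hv
  have hQd : Q = volume.withDensity (gaussianPDF (1/2 - ε) v) := gaussianReal_of_var_ne_zero _ hv
  have hPf : P.map clip01 = (Q.map clip01).withDensity H := by
    rw [map_clip01_decomp P, map_clip01_decomp Q, withDensity_add_measure, withDensity_add_measure,
      withDensity_smul_measure, withDensity_smul_measure, withDensity_dirac hHmeas,
      withDensity_dirac hHmeas]
    congr 1
    · congr 1
      · rw [hQd, hPd, restrict_withDensity measurableSet_Ioo,
          restrict_withDensity measurableSet_Ioo,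
          ← withDensity_mul _ (measurable_gaussianPDF _ _) hHmeas]
        refine withDensity_congr_ae ?_
        filter_upwards [ae_restrict_mem measurableSet_Ioo] with x hx
        exact (hpdfm x hx).symm
      · rw [smul_smul, hH0, ENNReal.mul_div_cancel hq0 (measure_ne_top _ _)]
    · rw [smul_smul, hH1, ENNReal.mul_div_cancel hq1 (measure_ne_top _ _)]
  have hac : P.map clip01 ≪ Q.map clip01 := by
    rw [hPf]; exact withDensity_absolutelyContinuous _ _
  have hrn : H =ᵐ[Q.map clip01] (P.map clip01).rnDeriv (Q.map clip01) :=
    Measure.eq_rnDeriv hHmeas Measure.MutuallySingular.zero_left (by rw [zero_add, ← hPf])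
  set G : ℝ → ℝ := fun x => Real.log (H x).toReal with hGdef
  have hGmeas : Measurable G := Real.measurable_log.comp hHmeas.ennreal_toReal
  have hllr : llr (P.map clip01) (Q.map clip01) =ᵐ[P.map clip01] G := by
    filter_upwards [hac.ae_le hrn] with x hx
    rw [llr, ← hx]
  have hLb : ∀ y : ℝ, 0 ≤ y → y ≤ 1 → |L y| ≤ |ε| * (1 + |ε|) / (2*σ^2) := by
    intro y h0 h1
    show |ε * (2*y - 1 + ε) / (2*σ^2)| ≤ |ε| * (1 + |ε|) / (2*σ^2)
    rw [abs_div, abs_mul, abs_of_pos (by positivity : (0:ℝ) < 2*σ^2)]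
    gcongr
    calc |2*y - 1 + ε| ≤ |2*y - 1| + |ε| := abs_add_le _ _
      _ ≤ 1 + |ε| := by
          have : |2*y - 1| ≤ 1 := abs_le.2 ⟨by linarith, by linarith⟩
          linarith
  have hGclip_bound : ∀ z : ℝ, |G (clip01 z)| ≤
      |Real.log ((P (Iic 0) / Q (Iic 0)).toReal)| + |Real.log ((P (Ici 1) / Q (Ici 1)).toReal)|
        + |ε| * (1 + |ε|) / (2*σ^2) := by
    intro z
    have hy0 : 0 ≤ clip01 z := clip01_nonneg z
    have hy1 : clip01 z ≤ 1 := clip01_le_one z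
    have c1nn : (0:ℝ) ≤ |Real.log ((P (Iic 0) / Q (Iic 0)).toReal)| := abs_nonneg _
    have c2nn : (0:ℝ) ≤ |Real.log ((P (Ici 1) / Q (Ici 1)).toReal)| := abs_nonneg _
    have c3nn : (0:ℝ) ≤ |ε| * (1 + |ε|) / (2*σ^2) := by positivity
    by_cases h0 : clip01 z = 0
    · have : G (clip01 z) = Real.log ((P (Iic 0) / Q (Iic 0)).toReal) := by
        show Real.log (H (clip01 z)).toReal = _
        rw [h0, hH0]
      rw [this]; linarith
    by_cases h1 : clip01 z = 1
    · have : G (clip01 z) = Real.log ((P (Ici 1) / Q (Ici 1)).toReal) := by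
        show Real.log (H (clip01 z)).toReal = _
        rw [h1, hH1]
      rw [this]; linarith
    · have hmem : clip01 z ∈ Ioo (0:ℝ) 1 :=
        ⟨hy0.lt_of_ne (Ne.symm h0), hy1.lt_of_ne h1⟩
      have : G (clip01 z) = L (clip01 z) := by
        show Real.log (H (clip01 z)).toReal = _
        rw [hHx _ hmem, ENNReal.toReal_ofReal (Real.exp_nonneg _), Real.log_exp]
      rw [this]
      have := hLb (clip01 z) hy0 hy1
      linarith [abs_nonneg (L (clip01 z))]
  have hIntclip : Integrable (fun z => G (clip01 z)) P := by
    refine Integrable.mono' (integrable_const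
        (|Real.log ((P (Iic 0) / Q (Iic 0)).toReal)| + |Real.log ((P (Ici 1) / Q (Ici 1)).toReal)|
          + |ε| * (1 + |ε|) / (2*σ^2)))
      ((hGmeas.comp measurable_clip01).aestronglyMeasurable) (ae_of_all _ fun z => ?_)
    rw [Real.norm_eq_abs]
    exact hGclip_bound z
  have hIntG : Integrable G (P.map clip01) := by
    rw [integrable_map_measure hGmeas.aestronglyMeasurable measurable_clip01.aemeasurable]
    exact hIntclip
  have hIntllr : Integrable (llr (P.map clip01) (Q.map clip01)) (P.map clip01) :=
    (integrable_congr hllr).2 hIntG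
  have hint_eq : ∫ x, llr (P.map clip01) (Q.map clip01) x ∂(P.map clip01)
      = ∫ z, G (clip01 z) ∂P := by
    rw [integral_congr_ae hllr,
      integral_map measurable_clip01.aemeasurable hGmeas.aestronglyMeasurable]
  have hIntId : Integrable (fun x => x) P := by
    rw [hPd, integrable_withDensity_iff (measurable_gaussianPDF _ _)
      (ae_of_all _ fun x => ENNReal.ofReal_lt_top)]
    refine (integrable_mul_gaussianPDFReal (1/2) hv).congr (ae_of_all _ fun x => ?_)
    show gaussianPDFReal (1/2) v x * x = x * (gaussianPDF (1/2) v x).toReal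
    rw [gaussianPDF, ENNReal.toReal_ofReal (gaussianPDFReal_nonneg _ _ _), mul_comm]
  have hMean : ∫ x, x ∂P = 1/2 := by
    have hrepr : P = volume.withDensity
        (fun x => ((gaussianPDFReal (1/2) v x).toNNReal : ℝ≥0∞)) := hPd
    rw [hrepr, integral_withDensity_eq_integral_smul
      (measurable_gaussianPDFReal (1/2) v).real_toNNReal]
    have hpt : ∀ x : ℝ, (gaussianPDFReal (1/2) v x).toNNReal • x
        = gaussianPDFReal (1/2) v x * x := by
      intro x
      rw [NNReal.smul_def, Real.coe_toNNReal _ (gaussianPDFReal_nonneg _ _ _), smul_eq_mul]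
    calc ∫ x, (gaussianPDFReal (1/2) v x).toNNReal • x
        = ∫ x, gaussianPDFReal (1/2) v x * x := integral_congr_ae (ae_of_all _ hpt)
      _ = 1/2 := integral_mul_gaussianPDFReal (1/2) hv
  have hIntL : Integrable L P := by
    rw [hLaffine]
    exact (hIntId.const_mul _).add (integrable_const _)
  have hIntExp : Integrable (fun x => rexp (-L x)) P := by
    rw [hPd, integrable_withDensity_iff (measurable_gaussianPDF _ _)
      (ae_of_all _ fun x => ENNReal.ofReal_lt_top)]
    refine (integrable_gaussianPDFReal (1/2 - ε) v).congr (ae_of_all _ fun x => ?_)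
    have h1 : gaussianPDFReal (1/2 - ε) v x * rexp (L x) = gaussianPDFReal (1/2) v x :=
      gaussianPDFReal_mul_exp hσ x
    show gaussianPDFReal (1/2 - ε) v x = rexp (-L x) * (gaussianPDF (1/2) v x).toReal
    rw [gaussianPDF, ENNReal.toReal_ofReal (gaussianPDFReal_nonneg _ _ _), ← h1, Real.exp_neg]
    field_simp
  have hqint : ∀ A : Set ℝ, MeasurableSet A → (Q A).toReal = ∫ x in A, rexp (-L x) ∂P := by
    intro A hA
    have h1 : Q A = ENNReal.ofReal (∫ x in A, gaussianPDFReal (1/2 - ε) v x) :=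
      gaussianReal_apply_eq_integral _ hv A
    rw [h1, ENNReal.toReal_ofReal (setIntegral_nonneg hA fun x _ => gaussianPDFReal_nonneg _ _ _)]
    have h2 : P.restrict A = (volume.restrict A).withDensity
        (fun x => ((gaussianPDFReal (1/2) v x).toNNReal : ℝ≥0∞)) := by
      rw [hPd, restrict_withDensity hA]
      rfl
    rw [h2, integral_withDensity_eq_integral_smul
      (measurable_gaussianPDFReal (1/2) v).real_toNNReal]
    refine (integral_congr_ae (ae_of_all _ fun x => ?_)).symm
    have h1x : gaussianPDFReal (1/2 - ε) v x * rexp (L x) = gaussianPDFReal (1/2) v x :=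
      gaussianPDFReal_mul_exp hσ x
    rw [NNReal.smul_def, Real.coe_toNNReal _ (gaussianPDFReal_nonneg _ _ _), smul_eq_mul,
      ← h1x, Real.exp_neg]
    field_simp
  have hsplit : ∀ f : ℝ → ℝ, Integrable f P →
      ∫ z, f z ∂P = (∫ z in Iic (0:ℝ), f z ∂P)
        + ((∫ z in Ioo (0:ℝ) 1, f z ∂P) + (∫ z in Ici (1:ℝ), f z ∂P)) := by
    intro f hf
    have hdisj : Disjoint (Ioo (0:ℝ) 1) (Ici (1:ℝ)) :=
      Set.disjoint_left.2 fun x hx hx' => absurd hx.2 (not_lt.2 hx')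
    rw [← integral_add_compl measurableSet_Iic hf, compl_Iic,
      ← Set.Ioo_union_Ici_eq_Ioi (zero_lt_one : (0:ℝ) < 1),
      setIntegral_union hdisj measurableSet_Ici hf.integrableOn hf.integrableOn]
  have h0val : ∫ z in Iic (0:ℝ), G (clip01 z) ∂P
      = Real.log ((P (Iic 0) / Q (Iic 0)).toReal) * (P (Iic 0)).toReal := by
    have he : ∀ z ∈ Iic (0:ℝ), G (clip01 z) = Real.log ((P (Iic 0) / Q (Iic 0)).toReal) := by
      intro z hz
      show Real.log (H (clip01 z)).toReal = _
      rw [clip01_of_nonpos hz, hH0]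
    rw [setIntegral_congr_fun measurableSet_Iic he, setIntegral_const, smul_eq_mul, mul_comm, Measure.real]
  have h1val : ∫ z in Ici (1:ℝ), G (clip01 z) ∂P
      = Real.log ((P (Ici 1) / Q (Ici 1)).toReal) * (P (Ici 1)).toReal := by
    have he : ∀ z ∈ Ici (1:ℝ), G (clip01 z) = Real.log ((P (Ici 1) / Q (Ici 1)).toReal) := by
      intro z hz
      show Real.log (H (clip01 z)).toReal = _
      rw [clip01_of_one_le hz, hH1]
    rw [setIntegral_congr_fun measurableSet_Ici he, setIntegral_const, smul_eq_mul, mul_comm, Measure.real]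
  have hmidval : ∫ z in Ioo (0:ℝ) 1, G (clip01 z) ∂P = ∫ z in Ioo (0:ℝ) 1, L z ∂P := by
    refine setIntegral_congr_fun measurableSet_Ioo fun z hz => ?_
    show Real.log (H (clip01 z)).toReal = _
    rw [clip01_of_mem hz.1.le hz.2.le, hHx z hz,
      ENNReal.toReal_ofReal (Real.exp_nonneg _), Real.log_exp]
  have ht0 := tail_jensen measurableSet_Iic hp0 hq0 (hqint _ measurableSet_Iic) hIntL hIntExp
  have ht1 := tail_jensen measurableSet_Ici hp1 hq1 (hqint _ measurableSet_Ici) hIntL hIntExp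
  have hLint : ∫ z, L z ∂P = ε^2 / (2*σ^2) := by
    rw [hLaffine, integral_add (hIntId.const_mul _) (integrable_const _), integral_const,
      probReal_univ, smul_eq_mul, one_mul, integral_const_mul, hMean]
    field_simp
    ring
  have hmain : ∫ x, llr (P.map clip01) (Q.map clip01) x ∂(P.map clip01) ≤ ε^2/(2*σ^2) := by
    rw [hint_eq, hsplit _ hIntclip, h0val, h1val, hmidval]
    have hsum := hsplit L hIntL
    rw [hLint] at hsum
    linarith
  show klDiv (P.map clip01) (Q.map clip01) ≤ ENNReal.ofReal (ε ^ 2 / (2 * σ ^ 2))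
  rw [klDiv, if_pos ⟨hac, hIntllr⟩]
  exact ENNReal.ofReal_le_ofReal hmain

end Main

/-- Lemma 8 of the paper: if `Z ~ N(1/2, σ²)`, `X = clip_{[0,1]}(Z)`
and `Y = clip_{[0,1]}(Z − ε)`, then `KL(law X, law Y) ≤ ε²/(2σ²)`. -/
theorem clipped_gaussian_kl {σ ε : ℝ} (hσ : 0 < σ) :
    klDiv ((gaussianReal (1/2) ⟨σ ^ 2, sq_nonneg σ⟩).map clip01)
        ((gaussianReal (1/2) ⟨σ ^ 2, sq_nonneg σ⟩).map fun z => clip01 (z - ε))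
      ≤ ENNReal.ofReal (ε ^ 2 / (2 * σ ^ 2)) := by
  have hmap : (gaussianReal (1/2) ⟨σ ^ 2, sq_nonneg σ⟩).map (fun z => clip01 (z - ε))
      = (gaussianReal (1/2 - ε) ⟨σ ^ 2, sq_nonneg σ⟩).map clip01 := by
    have h1 : (gaussianReal (1/2) (⟨σ ^ 2, sq_nonneg σ⟩ : ℝ≥0)).map (· + -ε)
        = gaussianReal (1/2 + -ε) ⟨σ ^ 2, sq_nonneg σ⟩ := gaussianReal_map_add_const (-ε)
    have h2 : ((gaussianReal (1/2) (⟨σ ^ 2, sq_nonneg σ⟩ : ℝ≥0)).map (· + -ε)).map clip01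
        = (gaussianReal (1/2) (⟨σ ^ 2, sq_nonneg σ⟩ : ℝ≥0)).map (fun z => clip01 (z - ε)) := by
      have hfun : (fun z : ℝ => clip01 (z - ε)) = clip01 ∘ (· + -ε) := by
        funext z
        show clip01 (z - ε) = clip01 (z + -ε)
        rw [sub_eq_add_neg]
      rw [Measure.map_map measurable_clip01 (measurable_add_const (-ε))]
      try rw [hfun]
    have h3 : (1:ℝ)/2 + -ε = 1/2 - ε := by ring
    rw [← h2, h1, h3]
  rw [hmap]
  exact clipped_kl_le hσ

end BanditLB
end

section
/- Let K ≥ 2, α ∈ (0,1), and let c₁ = (4/9)²·(3√5 + 1)². Fix j ∈ {1,…,K} and set ε = (1/2)·√((α/2)(1−α/2)·K/T). Let the losses ℓ_{i,t} ∈ {0,1}, for 1 ≤ i ≤ K and 1 ≤ t ≤ T, be independent with ℓ_{j,t} ~ Bernoulli(α/2) and ℓ_{i,t} ~ Bernoulli(α/2 + ε) for i ≠ j. If T ≥ 8K/α and δ ∈ (0,1) satisfies T·α ≥ c₁·log(K/δ), then P( Q_T > α·T·K ) ≤ δ, where Q_T = ∑_{t=1}^T ∑_{i=1}^K (ℓ_{i,t}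 − μ_{i,T})² with μ_{i,T} = (1/T)·∑_{t=1}^T ℓ_{i,t}. -/
open MeasureTheory ProbabilityTheory Real
open scoped ENNReal NNReal Classical

namespace BanditLB

variable {K : ℕ} {Ω : Type*} [MeasurableSpace Ω]

/-- Integral of a function against the Bernoulli measure. -/
lemma bern_integral {q : ℝ} (h0 : 0 ≤ q) (h1 : q ≤ 1) (f : ℝ → ℝ) :
    ∫ x, f x ∂(bern q) = q * f 1 + (1 - q) * f 0 := by
  have hd : ∀ a : ℝ, Integrable f (Measure.dirac a) :=
    fun a => (integrable_const (f a)).congr (ae_eq_dirac f).symm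
  rw [bern, integral_add_measure ((hd 1).smul_measure ENNReal.ofReal_ne_top)
      ((hd 0).smul_measure ENNReal.ofReal_ne_top),
    integral_smul_measure, integral_smul_measure, integral_dirac, integral_dirac,
    ENNReal.toReal_ofReal h0, ENNReal.toReal_ofReal (by linarith)]
  simp [smul_eq_mul]

/-- The Bernoulli measure is carried by `{0, 1}`. -/
lemma bern_compl_eq_zero {q : ℝ} : bern q ({0, 1} : Set ℝ)ᶜ = 0 := by
  simp [bern, Measure.dirac_apply]

set_option maxHeartbeats 1000000 in
/-- Part 2 of the proof of Theorem 5: tail bound on the quadratic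
variation.  With independent losses, arm `j` being `Ber(α/2)` and all other arms
`Ber(α/2 + ε)` where `ε = (1/2)·√((α/2)(1−α/2)K/T)`, if `T ≥ 8K/α` and
`T·α ≥ c₁·log(K/δ)` with `c₁ = (4/9)²(3√5+1)²`, then `P(Q_T > αTK) ≤ δ`. -/
theorem quadratic_variation_tail
    {K T : ℕ} (hK : 2 ≤ K) {α : ℝ} (hα : α ∈ Set.Ioo (0:ℝ) 1) (j : Fin K)
    (hT : (T : ℝ) ≥ 8 * K / α) {δ : ℝ} (hδ : δ ∈ Set.Ioo (0:ℝ) 1)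
    (hTα : (T : ℝ) * α ≥ (4/9)^2 * (3 * Real.sqrt 5 + 1)^2 * Real.log (K / δ))
    {Ω : Type*} [MeasurableSpace Ω] (μ : Measure Ω) [IsProbabilityMeasure μ]
    (L : Fin K → Fin T → Ω → ℝ)
    (hmeas : ∀ i t, Measurable (L i t))
    (hindep : iIndepFun
      (fun q : Fin K × Fin T => L q.1 q.2) μ)
    (hdist : ∀ i t, μ.map (L i t) = bern (if i = j then α / 2
      else α / 2 + (1/2) * Real.sqrt ((α/2) * (1 - α/2) * K / T))) :
    μ {ω | (∑ t : Fin T, ∑ i : Fin K,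
        (L i t ω - (1 / (T : ℝ)) * ∑ s : Fin T, L i s ω) ^ 2) > α * T * K}
      ≤ ENNReal.ofReal δ := by
  obtain ⟨hα0, hα1⟩ := hα
  obtain ⟨hδ0, hδ1⟩ := hδ
  have hKr : (2:ℝ) ≤ (K:ℝ) := by exact_mod_cast hK
  have hαT : 8 * (K:ℝ) ≤ α * T := by
    rw [ge_iff_le, div_le_iff₀ hα0] at hT; linarith
  have hT0 : (0:ℝ) < T := by
    have h8 : (0:ℝ) < 8 * K / α := by positivity
    linarith
  set ε : ℝ := (1/2) * Real.sqrt ((α/2) * (1 - α/2) * K / T) with hεdef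
  set p : Fin K → ℝ := fun i => if i = j then α / 2 else α / 2 + ε with hpdef
  have hε0 : 0 ≤ ε := by positivity
  have hεle : ε ≤ α / 8 := by
    have h1 : (α/2) * (1 - α/2) * K / T ≤ (α/4)^2 := by
      rw [div_le_iff₀ hT0]; nlinarith
    have h2 : Real.sqrt ((α/2) * (1 - α/2) * K / T) ≤ α/4 := by
      calc Real.sqrt ((α/2) * (1 - α/2) * K / T) ≤ Real.sqrt ((α/4)^2) :=
            Real.sqrt_le_sqrt h1
        _ = α/4 := Real.sqrt_sq (by positivity)
    rw [hεdef]; linarith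
  have hp0 : ∀ i, 0 ≤ p i := by
    intro i; rw [hpdef]; dsimp only; split <;> linarith
  have hple : ∀ i, p i ≤ 5 * α / 8 := by
    intro i; rw [hpdef]; dsimp only; split <;> linarith
  have hp1 : ∀ i, p i ≤ 1 := fun i => le_trans (hple i) (by linarith)
  have hdist' : ∀ i t, μ.map (L i t) = bern (p i) := fun i t => hdist i t
  -- a.e. the losses take values in {0,1}
  have hae : ∀ᵐ ω ∂μ, ∀ q : Fin K × Fin T, L q.1 q.2 ω = 0 ∨ L q.1 q.2 ω = 1 := by
    rw [ae_all_iff]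
    intro q
    rw [ae_iff]
    have hset : {ω | ¬(L q.1 q.2 ω = 0 ∨ L q.1 q.2 ω = 1)}
        = L q.1 q.2 ⁻¹' (({0, 1} : Set ℝ)ᶜ) := by
      ext ω; simp [Set.mem_preimage]
    rw [hset, ← Measure.map_apply (hmeas q.1 q.2)
      ((MeasurableSet.insert (measurableSet_singleton 1) 0).compl),
      hdist' q.1 q.2, bern_compl_eq_zero]
  set l2 : ℝ := Real.log 2 with hl2def
  have hl2 : (0.6931471803 : ℝ) < l2 := Real.log_two_gt_d9
  have hl20 : 0 ≤ l2 := by linarith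
  -- integrability of exp(l2 * L)
  have hint : ∀ q : Fin K × Fin T,
      Integrable (fun ω => Real.exp (l2 * L q.1 q.2 ω)) μ := by
    intro q
    refine Integrable.mono' (integrable_const (2:ℝ))
      (((hmeas q.1 q.2).const_mul l2).exp.aestronglyMeasurable) ?_
    filter_upwards [hae] with ω hω
    rw [Real.norm_eq_abs, abs_of_pos (Real.exp_pos _)]
    rcases hω q with h | h <;> rw [h]
    · rw [mul_zero, Real.exp_zero]; norm_num
    · rw [mul_one, hl2def, Real.exp_log (by norm_num : (0:ℝ) < 2)]
  have hmeas' : ∀ q : Fin K × Fin T, Measurable (fun ω => L q.1 q.2 ω) :=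
    fun q => hmeas q.1 q.2
  -- mgf of each coordinate
  have hmgf : ∀ q : Fin K × Fin T, mgf (L q.1 q.2) μ l2 = 1 + p q.1 := by
    intro q
    have hg : AEStronglyMeasurable (fun x : ℝ => Real.exp (l2 * x))
        (μ.map (L q.1 q.2)) :=
      (Real.continuous_exp.comp (continuous_const.mul continuous_id)).aestronglyMeasurable
    have : mgf (L q.1 q.2) μ l2 = ∫ x, Real.exp (l2 * x) ∂(μ.map (L q.1 q.2)) :=
      (integral_map (hmeas q.1 q.2).aemeasurable hg).symm
    rw [this, hdist' q.1 q.2, bern_integral (hp0 q.1) (hp1 q.1)]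
    rw [mul_one, mul_zero, Real.exp_zero, hl2def, Real.exp_log (by norm_num : (0:ℝ) < 2)]
    ring
  -- Chernoff bound
  set SF : Ω → ℝ := ∑ q : Fin K × Fin T, L q.1 q.2 with hSFdef
  have hSint : Integrable (fun ω => Real.exp (l2 * SF ω)) μ :=
    hindep.integrable_exp_mul_sum hmeas' (fun q _ => hint q)
  have hchern := measure_ge_le_exp_mul_mgf (μ := μ) (X := SF) (α * T * K) hl20 hSint
  rw [hSFdef] at hchern
  rw [hindep.mgf_sum hmeas' Finset.univ] at hchern
  have hSF : ∀ ω, SF ω = ∑ i : Fin K, ∑ t : Fin T, L i t ω := by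
    intro ω
    rw [hSFdef, Finset.sum_apply]
    exact Fintype.sum_prod_type (f := fun q : Fin K × Fin T => L q.1 q.2 ω)
  -- per-arm bound: quadratic variation ≤ sum of losses
  have per : ∀ (f : Fin T → ℝ), (∀ t, f t = 0 ∨ f t = 1) →
      ∑ t : Fin T, (f t - (1/(T:ℝ)) * ∑ s : Fin T, f s)^2 ≤ ∑ t : Fin T, f t := by
    intro f hf
    set m : ℝ := (1/(T:ℝ)) * ∑ s : Fin T, f s with hm
    have hmT : (T:ℝ) * m = ∑ s : Fin T, f s := by
      rw [hm]; field_simp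
    calc ∑ t : Fin T, (f t - m)^2
        = ∑ t : Fin T, (f t - 2*m*f t + m^2) := by
          refine Finset.sum_congr rfl fun t _ => ?_
          rcases hf t with h | h <;> rw [h] <;> ring
      _ = (∑ t : Fin T, f t) - 2*m*(∑ t : Fin T, f t) + (T:ℝ)*m^2 := by
          rw [Finset.sum_add_distrib, Finset.sum_sub_distrib, ← Finset.mul_sum,
            Finset.sum_const, Finset.card_univ, Fintype.card_fin, nsmul_eq_mul]
      _ = (∑ t : Fin T, f t) - (T:ℝ)*m^2 := by rw [← hmT]; ring
      _ ≤ ∑ t : Fin T, f t := by nlinarith [sq_nonneg m, hT0.le]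
  -- event inclusion
  have hsub : {ω | (∑ t : Fin T, ∑ i : Fin K,
        (L i t ω - (1 / (T : ℝ)) * ∑ s : Fin T, L i s ω) ^ 2) > α * T * K}
      ≤ᵐ[μ] {ω | α * T * K ≤ SF ω} := by
    filter_upwards [hae] with ω hω hmem
    have hQS : (∑ t : Fin T, ∑ i : Fin K,
        (L i t ω - (1 / (T : ℝ)) * ∑ s : Fin T, L i s ω) ^ 2) ≤ SF ω := by
      rw [hSF ω, Finset.sum_comm]
      exact Finset.sum_le_sum fun i _ => per (fun t => L i t ω) (fun t => hω (i, t))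
    exact le_trans (le_of_lt hmem) hQS
  -- product bound
  have hprodle : (∏ q : Fin K × Fin T, mgf (L q.1 q.2) μ l2)
      ≤ Real.exp (5 * α / 8 * (K * T)) := by
    calc (∏ q : Fin K × Fin T, mgf (L q.1 q.2) μ l2)
        = ∏ q : Fin K × Fin T, (1 + p q.1) :=
          Finset.prod_congr rfl fun q _ => hmgf q
      _ ≤ ∏ _q : Fin K × Fin T, Real.exp (5 * α / 8) := by
          refine Finset.prod_le_prod (fun q _ => by linarith [hp0 q.1]) fun q _ => ?_
          have := Real.add_one_le_exp (5 * α / 8)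
          linarith [hple q.1]
      _ = Real.exp (5 * α / 8 * (K * T)) := by
          rw [Finset.prod_const, Finset.card_univ, Fintype.card_prod,
            Fintype.card_fin, Fintype.card_fin, ← Real.exp_nat_mul]
          congr 1
          push_cast
          ring
  -- numeric conclusion
  have hlogδ : Real.log δ < 0 := Real.log_neg hδ0 hδ1
  have hlogK : 0 ≤ Real.log (K : ℝ) := Real.log_nonneg (by linarith)
  have hLsplit : Real.log ((K:ℝ) / δ) = Real.log (K:ℝ) - Real.log δ :=
    Real.log_div (by positivity) (ne_of_gt hδ0)
  have hs5 : (2.2360679 : ℝ) ≤ Real.sqrt 5 := by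
    nlinarith [Real.sq_sqrt (show (0:ℝ) ≤ 5 by norm_num), Real.sqrt_nonneg 5]
  have hLpos : 0 ≤ Real.log ((K:ℝ) / δ) := by rw [hLsplit]; linarith
  have hc1 : (11.7 : ℝ) ≤ (4/9)^2 * (3 * Real.sqrt 5 + 1)^2 := by
    nlinarith [hs5, Real.sqrt_nonneg 5]
  have hfinal : Real.exp (-l2 * (α * T * K)) * Real.exp (5 * α / 8 * (K * T)) ≤ δ := by
    rw [← Real.exp_add, ← Real.exp_log hδ0]
    apply Real.exp_le_exp.2
    -- -l2*(α*T*K) + 5α/8*(K*T) ≤ log δ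
    have hA0 : (0:ℝ) ≤ α * T := by positivity
    have hAc : (4/9)^2 * (3 * Real.sqrt 5 + 1)^2 * Real.log ((K:ℝ)/δ) ≤ α * (T:ℝ) := by
      linarith [hTα]
    have hx : (0:ℝ) ≤ l2 - 5/8 := by linarith
    have h1 : (11.7 : ℝ) * Real.log ((K:ℝ)/δ) ≤ α * T :=
      le_trans (mul_le_mul_of_nonneg_right hc1 hLpos) hAc
    have e2 : 11.7 * Real.log ((K:ℝ)/δ) * (2*(l2-5/8)) ≤ (α*(T:ℝ)) * (2*(l2-5/8)) :=
      mul_le_mul_of_nonneg_right h1 (by linarith)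
    have e3 : Real.log ((K:ℝ)/δ) * 1 ≤ Real.log ((K:ℝ)/δ) * (2*(l2-5/8)*11.7) :=
      mul_le_mul_of_nonneg_left (by linarith) hLpos
    have e1 : (0:ℝ) ≤ (α*(T:ℝ)) * ((K:ℝ) - 2) * (l2 - 5/8) :=
      mul_nonneg (mul_nonneg hA0 (by linarith)) hx
    have e4 : -Real.log δ ≤ Real.log ((K:ℝ)/δ) := by rw [hLsplit]; linarith
    nlinarith [e1, e2, e3, e4]
  calc μ {ω | (∑ t : Fin T, ∑ i : Fin K,
        (L i t ω - (1 / (T : ℝ)) * ∑ s : Fin T, L i s ω) ^ 2) > α * T * K}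
      ≤ μ {ω | α * T * K ≤ SF ω} := measure_mono_ae hsub
    _ ≤ ENNReal.ofReal δ := by
        rw [ENNReal.le_ofReal_iff_toReal_le (measure_ne_top μ _) hδ0.le]
        exact le_trans hchern (le_trans
          (mul_le_mul_of_nonneg_left hprodle (Real.exp_nonneg _)) hfinal)

end BanditLB
end
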